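/- Suppose a linear functional ℓ : H(n,2d) → ℝ spans an extreme ray of the dual cone Σ(n,2d)*. Then either rank Q_ℓ = 1 (i.e., dim W_ℓ = dim H(n,d) − 1), or the forms in the kernel W_ℓ have no common zero in ℂⁿ∖{0}: for every z ∈ ℂⁿ∖{0} there exists p ∈ W_ℓ with p(z) ≠ 0. -/

import Mathlib

open MvPolynomial

/-- Membership in the cone Σ(n,2d): a sum of squares of degree-d forms. -/
def IsSOS (n d : ℕ) (p : MvPolynomial (Fin n) ℝ) : Prop :=
  ∃ (r : ℕ) (q : Fin r → MvPolynomial (Fin n) ℝ),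
    (∀ i, (q i).IsHomogeneous d) ∧ p = ∑ i, q i ^ 2

/-- ℓ belongs to the dual cone Σ(n,2d)*: it is nonnegative on all sums of squares. -/
def InDualSigma (n d : ℕ) (l : MvPolynomial (Fin n) ℝ →ₗ[ℝ] ℝ) : Prop :=
  ∀ p : MvPolynomial (Fin n) ℝ, IsSOS n d p → 0 ≤ l p

/-- ℓ spans an extreme ray of Σ(n,2d)* (as a linear functional on H(n,2d)):
ℓ is nonzero on H(n,2d), lies in the dual cone, and whenever ℓ = ℓ₁ + ℓ₂ on H(n,2d) with
ℓ₁, ℓ₂ in the dual cone, each ℓᵢ is a nonnegative multiple of ℓ on H(n,2d). -/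
def SpansExtremeRay (n d : ℕ) (l : MvPolynomial (Fin n) ℝ →ₗ[ℝ] ℝ) : Prop :=
  (∃ f : MvPolynomial (Fin n) ℝ, f.IsHomogeneous (2 * d) ∧ l f ≠ 0) ∧
  InDualSigma n d l ∧
  ∀ l₁ l₂ : MvPolynomial (Fin n) ℝ →ₗ[ℝ] ℝ, InDualSigma n d l₁ → InDualSigma n d l₂ →
    (∀ f : MvPolynomial (Fin n) ℝ, f.IsHomogeneous (2 * d) → l f = l₁ f + l₂ f) →
    (∃ c : ℝ, 0 ≤ c ∧ ∀ f : MvPolynomial (Fin n) ℝ, f.IsHomogeneous (2 * d) → l₁ f = c * l f) ∧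
    (∃ c : ℝ, 0 ≤ c ∧ ∀ f : MvPolynomial (Fin n) ℝ, f.IsHomogeneous (2 * d) → l₂ f = c * l f)

/-- The kernel W_ℓ of the quadratic form Q_ℓ(f) = ℓ(f²) on H(n,d). -/
def Wker (n d : ℕ) (l : MvPolynomial (Fin n) ℝ →ₗ[ℝ] ℝ) : Set (MvPolynomial (Fin n) ℝ) :=
  {p | p.IsHomogeneous d ∧ ∀ q : MvPolynomial (Fin n) ℝ, q.IsHomogeneous d → l (p * q) = 0}

namespace Stmt7Aux

variable {n d : ℕ} {l : MvPolynomial (Fin n) ℝ →ₗ[ℝ] ℝ}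

lemma sq_nonneg_of_dual (hl : InDualSigma n d l) {q : MvPolynomial (Fin n) ℝ}
    (hq : q.IsHomogeneous d) : 0 ≤ l (q * q) :=
  hl (q * q) ⟨1, fun _ => q, fun _ => hq, by simp [sq]⟩

lemma cauchy_schwarz (hl : InDualSigma n d l) {p q : MvPolynomial (Fin n) ℝ}
    (hp : p.IsHomogeneous d) (hq : q.IsHomogeneous d) :
    (l (p * q)) ^ 2 ≤ l (p * p) * l (q * q) := by
  have key : ∀ t : ℝ, 0 ≤ l (q * q) * (t * t) + (2 * l (p * q)) * t + l (p * p) := by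
    intro t
    have h1 : (t • q + p).IsHomogeneous d := by
      have := (homogeneousSubmodule (Fin n) ℝ d).add_mem
        ((homogeneousSubmodule (Fin n) ℝ d).smul_mem t
          ((mem_homogeneousSubmodule _ _).mpr hq))
        ((mem_homogeneousSubmodule _ _).mpr hp)
      exact (mem_homogeneousSubmodule _ _).mp this
    have h0 := sq_nonneg_of_dual hl h1
    have expand : l ((t • q + p) * (t • q + p))
        = l (q * q) * (t * t) + (2 * l (p * q)) * t + l (p * p) := by
      simp only [add_mul, mul_add, smul_mul_assoc, mul_smul_comm, smul_smul,
        map_add, map_smul, smul_eq_mul, mul_comm q p]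
      ring
    rw [expand] at h0
    exact h0
  have hd := discrim_le_zero key
  simp only [discrim] at hd
  nlinarith [hd]

end Stmt7Aux

set_option maxHeartbeats 1600000 in
theorem stmt_7
    (n d : ℕ) (hn : 0 < n) (hd : 0 < d)
    (l : MvPolynomial (Fin n) ℝ →ₗ[ℝ] ℝ)
    (hl : SpansExtremeRay n d l) :
    Module.finrank ℝ (Submodule.span ℝ (Wker n d l)) =
      Module.finrank ℝ (homogeneousSubmodule (Fin n) ℝ d) - 1 ∨
    ∀ z : Fin n → ℂ, z ≠ 0 → ∃ p ∈ Wker n d l, aeval z p ≠ 0 := by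
  obtain ⟨hne, hdual, hext⟩ := hl
  set V := homogeneousSubmodule (Fin n) ℝ d with hV
  haveI : FiniteDimensional ℝ V := by
    apply Submodule.finiteDimensional_of_le (S₂ := restrictTotalDegree (Fin n) ℝ d)
    intro p hp
    rw [mem_restrictTotalDegree]
    exact ((mem_homogeneousSubmodule _ _).mp hp).totalDegree_le
  -- the bilinear form B on V
  set B : V →ₗ[ℝ] V →ₗ[ℝ] ℝ := LinearMap.mk₂ ℝ (fun p q : V => l (p.1 * q.1))
    (fun m₁ m₂ q => by simp [add_mul])
    (fun c m q => by simp [smul_mul_assoc])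
    (fun m q₁ q₂ => by simp [mul_add])
    (fun c m q => by simp [mul_smul_comm]) with hB
  have hBapply : ∀ p q : V, B p q = l (p.1 * q.1) := fun p q => rfl
  have hBsymm : ∀ p q : V, B p q = B q p := by
    intro p q; simp only [hBapply, mul_comm]
  have hB0 : ∀ q : V, 0 ≤ B q q := fun q =>
    Stmt7Aux.sq_nonneg_of_dual hdual q.2
  have hCS : ∀ p q : V, (B p q) ^ 2 ≤ B p p * B q q := fun p q =>
    Stmt7Aux.cauchy_schwarz hdual p.2 q.2
  have hker_of : ∀ x : V, B x x = 0 → x ∈ LinearMap.ker B := by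
    intro x hx
    rw [LinearMap.mem_ker]
    ext y
    have h2 : (B x y) ^ 2 ≤ 0 := by
      have := hCS x y
      rw [hx, zero_mul] at this
      exact this
    have h3 : B x y = 0 := by nlinarith [sq_nonneg (B x y)]
    simpa using h3
  -- identification of Wker with ker B
  have hWset : Wker n d l = ((LinearMap.ker B).map V.subtype : Set (MvPolynomial (Fin n) ℝ)) := by
    ext p
    constructor
    · rintro ⟨hp, hpq⟩
      refine ⟨⟨p, (mem_homogeneousSubmodule _ _).mpr hp⟩, ?_, rfl⟩
      simp only [SetLike.mem_coe, LinearMap.mem_ker]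
      ext y
      exact hpq y.1 y.2
    · rintro ⟨x, hx, rfl⟩
      simp only [SetLike.mem_coe, LinearMap.mem_ker] at hx
      refine ⟨x.2, fun q hq => ?_⟩
      have := congrArg (fun f : V →ₗ[ℝ] ℝ => f ⟨q, (mem_homogeneousSubmodule _ _).mpr hq⟩) hx
      simpa [hBapply] using this
  have hspan : Submodule.span ℝ (Wker n d l) = (LinearMap.ker B).map V.subtype := by
    rw [hWset]; exact Submodule.span_eq _
  -- Riesz representation for functionals vanishing on ker B
  have hriesz : ∀ φ : Module.Dual ℝ V, (∀ x ∈ LinearMap.ker B, φ x = 0) →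
      ∃ h : V, ∀ q : V, B h q = φ q := by
    intro φ hφ
    have hle : LinearMap.range B ≤ (LinearMap.ker B).dualAnnihilator := by
      rintro _ ⟨x, rfl⟩
      rw [Submodule.mem_dualAnnihilator]
      intro w hw
      rw [hBsymm]
      rw [LinearMap.mem_ker] at hw
      rw [hw]; rfl
    have h1 : Module.finrank ℝ (LinearMap.range B) + Module.finrank ℝ (LinearMap.ker B)
        = Module.finrank ℝ V := LinearMap.finrank_range_add_finrank_ker B
    have h2 : Module.finrank ℝ ((LinearMap.ker B).dualAnnihilator)
        = Module.finrank ℝ (V ⧸ (LinearMap.ker B)) :=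
      (LinearEquiv.finrank_eq (Subspace.quotEquivAnnihilator (LinearMap.ker B))).symm
    have h3 : Module.finrank ℝ (V ⧸ (LinearMap.ker B)) + Module.finrank ℝ (LinearMap.ker B)
        = Module.finrank ℝ V := Submodule.finrank_quotient_add_finrank _
    have heq : LinearMap.range B = (LinearMap.ker B).dualAnnihilator := by
      apply Submodule.eq_of_le_of_finrank_le hle
      rw [h2]
      omega
    have hmem : φ ∈ LinearMap.range B := by
      rw [heq, Submodule.mem_dualAnnihilator]; exact hφ
    obtain ⟨h, hh⟩ := hmem
    exact ⟨h, fun q => by rw [← hh]⟩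
  -- main case split
  refine or_iff_not_imp_right.mpr fun hcon => ?_
  push_neg at hcon
  obtain ⟨z, hz0, hzW⟩ := hcon
  -- evaluation at z as an ℝ-linear map on V
  set e : V →ₗ[ℝ] ℂ :=
    ((aeval z : MvPolynomial (Fin n) ℝ →ₐ[ℝ] ℂ).toLinearMap) ∘ₗ V.subtype with he
  have heapply : ∀ q : V, e q = aeval z q.1 := fun q => rfl
  have hzW' : ∀ x : V, x ∈ LinearMap.ker B → e x = 0 := by
    intro x hx
    have : (x : MvPolynomial (Fin n) ℝ) ∈ Wker n d l := by
      rw [hWset]; exact ⟨x, hx, rfl⟩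
    exact hzW x.1 this
  -- Riesz representation of the real and imaginary parts of e
  obtain ⟨hU, hhU⟩ := hriesz (Complex.reLm ∘ₗ e) (fun x hx => by simp [hzW' x hx])
  obtain ⟨hW, hhW⟩ := hriesz (Complex.imLm ∘ₗ e) (fun x hx => by simp [hzW' x hx])
  set C : ℝ := B hU hU + B hW hW with hC
  have hC0 : 0 ≤ C := add_nonneg (hB0 _) (hB0 _)
  have hbound : ∀ q : V, Complex.normSq (e q) ≤ C * B q q := by
    intro q
    have h1 : ((e q).re) ^ 2 ≤ B hU hU * B q q := by
      have h := hCS hU q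
      rw [hhU q] at h
      simpa using h
    have h2 : ((e q).im) ^ 2 ≤ B hW hW * B q q := by
      have h := hCS hW q
      rw [hhW q] at h
      simpa using h
    have h3 := hB0 q
    rw [Complex.normSq_apply]
    nlinarith [h1, h2]
  -- the perturbation functionals
  set ε : ℝ := (C + 1)⁻¹ with hε
  have hεpos : 0 < ε := by positivity
  have hεe : ε * (C + 1) = 1 := inv_mul_cancel₀ (by positivity)
  have key : ∀ c : ℂ, ‖c‖ ≤ 1 →
      InDualSigma n d ((1/2 : ℝ) • l + (ε/2) •
        (Complex.reLm ∘ₗ (LinearMap.mulLeft ℝ c) ∘ₗ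
          ((aeval z : MvPolynomial (Fin n) ℝ →ₐ[ℝ] ℂ).toLinearMap))) := by
    intro c hcabs p hp
    obtain ⟨r, q, hq, rfl⟩ := hp
    rw [map_sum]
    apply Finset.sum_nonneg
    intro i _
    set qi : V := ⟨q i, (mem_homogeneousSubmodule _ _).mpr (hq i)⟩ with hqi
    set w : ℂ := aeval z (q i) with hw
    have hb0 : 0 ≤ B qi qi := hB0 qi
    have hbd : Complex.normSq w ≤ C * B qi qi := hbound qi
    have hre : -(Complex.normSq w) ≤ (c * w ^ 2).re := by
      have hab : ‖c * w ^ 2‖ ≤ Complex.normSq w := by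
        rw [norm_mul, norm_pow, ← Complex.sq_norm]
        nlinarith [norm_nonneg w, norm_nonneg c,
          sq_nonneg ‖w‖]
      have habs2 := Complex.abs_re_le_norm (c * w ^ 2)
      have := abs_le.mp habs2
      linarith [this.1]
    have hval : ((1/2 : ℝ) • l + (ε/2) •
        (Complex.reLm ∘ₗ (LinearMap.mulLeft ℝ c) ∘ₗ
          ((aeval z : MvPolynomial (Fin n) ℝ →ₐ[ℝ] ℂ).toLinearMap))) (q i ^ 2)
        = (1/2) * B qi qi + (ε/2) * (c * w ^ 2).re := by
      simp only [LinearMap.add_apply, LinearMap.smul_apply, smul_eq_mul,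
        LinearMap.coe_comp, Function.comp_apply, AlgHom.toLinearMap_apply,
        LinearMap.mulLeft_apply, Complex.reLm_coe, map_pow]
      rw [hBapply, ← hw]
      congr 2
      rw [sq]
    rw [hval]
    nlinarith [hb0, hbd, hre, hC0, hεpos, hεe]
  have hext2 : ∀ c : ℂ, ‖c‖ ≤ 1 → ∃ t : ℝ,
      ∀ f : MvPolynomial (Fin n) ℝ, f.IsHomogeneous (2 * d) →
      ((c * aeval z f).re) = t * l f := by
    intro c hc
    set s : MvPolynomial (Fin n) ℝ →ₗ[ℝ] ℝ :=
      Complex.reLm ∘ₗ (LinearMap.mulLeft ℝ c) ∘ₗ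
        ((aeval z : MvPolynomial (Fin n) ℝ →ₐ[ℝ] ℂ).toLinearMap) with hs
    set s' : MvPolynomial (Fin n) ℝ →ₗ[ℝ] ℝ :=
      Complex.reLm ∘ₗ (LinearMap.mulLeft ℝ (-c)) ∘ₗ
        ((aeval z : MvPolynomial (Fin n) ℝ →ₐ[ℝ] ℂ).toLinearMap) with hs'
    have hs'val : ∀ f, s' f = -(s f) := by
      intro f
      simp [hs, hs', neg_mul]
    have h1 := key c hc
    have h2 := key (-c) (by simpa using hc)
    have hsum : ∀ f : MvPolynomial (Fin n) ℝ, f.IsHomogeneous (2 * d) →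
        l f = ((1/2 : ℝ) • l + (ε/2) • s) f + ((1/2 : ℝ) • l + (ε/2) • s') f := by
      intro f _
      simp only [LinearMap.add_apply, LinearMap.smul_apply, smul_eq_mul, hs'val]
      ring
    obtain ⟨⟨a, _, hEq⟩, -⟩ := hext _ _ h1 h2 hsum
    refine ⟨(2 * a - 1) / ε, fun f hf => ?_⟩
    have h3 := hEq f hf
    simp only [LinearMap.add_apply, LinearMap.smul_apply, smul_eq_mul] at h3
    have hsf : s f = (c * aeval z f).re := by
      simp [hs]
    rw [hsf] at h3
    rw [div_mul_eq_mul_div, eq_div_iff (ne_of_gt hεpos)]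
    linarith
  obtain ⟨t₁, ht₁⟩ := hext2 1 (by simp)
  obtain ⟨t₂, ht₂⟩ := hext2 Complex.I (by simp)
  set γ : ℂ := ⟨t₁, -t₂⟩ with hγdef
  have heval : ∀ f : MvPolynomial (Fin n) ℝ, f.IsHomogeneous (2 * d) →
      aeval z f = γ * ((l f : ℝ) : ℂ) := by
    intro f hf
    have h1 := ht₁ f hf
    have h2 := ht₂ f hf
    rw [one_mul] at h1
    apply Complex.ext
    · simp [hγdef, h1]
    · have : (aeval z f).im = -(t₂ * l f) := by
        rw [← h2]; simp
      simp [hγdef, this]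
  obtain ⟨j, hj⟩ := Function.ne_iff.mp hz0
  have hj' : z j ≠ 0 := by simpa using hj
  have hγ0 : γ ≠ 0 := by
    intro h
    have hXd : ((X j : MvPolynomial (Fin n) ℝ) ^ (2 * d)).IsHomogeneous (2 * d) := by
      simpa using (isHomogeneous_X ℝ j).pow (2 * d)
    have := heval _ hXd
    rw [h, zero_mul] at this
    simp only [map_pow, aeval_X] at this
    exact pow_ne_zero (2 * d) hj' this
  have hsq : ∀ q : V, (e q) ^ 2 = γ * ((B q q : ℝ) : ℂ) := by
    intro q
    have hmem := (mem_homogeneousSubmodule _ _).mp q.2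
    have hm : ((q : MvPolynomial (Fin n) ℝ) * q).IsHomogeneous (2 * d) := by
      rw [two_mul]; exact hmem.mul hmem
    have := heval _ hm
    rw [map_mul] at this
    rw [sq, heapply, this, hBapply]
  have hkereq : LinearMap.ker B = LinearMap.ker e := by
    ext x
    simp only [LinearMap.mem_ker]
    constructor
    · intro hx
      have hb : B x x = 0 := by rw [hx]; rfl
      have h := hsq x
      rw [hb] at h
      simp only [Complex.ofReal_zero, mul_zero] at h
      exact pow_eq_zero_iff (two_ne_zero) |>.mp h
    · intro hx
      have h := hsq x
      rw [hx] at h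
      simp only [ne_eq, zero_pow, OfNat.ofNat_ne_zero, not_false_eq_true] at h
      have hb : ((B x x : ℝ) : ℂ) = 0 := by
        rcases mul_eq_zero.mp h.symm with h' | h'
        · exact absurd h' hγ0
        · exact h'
      have hb' : B x x = 0 := by exact_mod_cast hb
      exact LinearMap.mem_ker.mp (hker_of x hb')
  have hrange1 : Module.finrank ℝ (LinearMap.range e) = 1 := by
    have hle2 : Module.finrank ℝ (LinearMap.range e) ≤ 2 := by
      have h := Submodule.finrank_le (LinearMap.range e)
      rwa [Complex.finrank_real_complex] at h
    have hne0 : LinearMap.range e ≠ ⊥ := by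
      intro h
      have hXd : ((X j : MvPolynomial (Fin n) ℝ) ^ d).IsHomogeneous d := by
        simpa using (isHomogeneous_X ℝ j).pow d
      set q₀ : V := ⟨(X j : MvPolynomial (Fin n) ℝ) ^ d,
        (mem_homogeneousSubmodule _ _).mpr hXd⟩ with hq₀
      have : e q₀ = 0 := by
        have hm : e q₀ ∈ LinearMap.range e := LinearMap.mem_range_self e q₀
        rw [h] at hm
        simpa using hm
      rw [heapply] at this
      simp only [hq₀, map_pow, aeval_X] at this
      exact pow_ne_zero d hj' this
    have hge1 : 1 ≤ Module.finrank ℝ (LinearMap.range e) := by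
      by_contra hcon1
      push_neg at hcon1
      interval_cases h : Module.finrank ℝ (LinearMap.range e)
      exact hne0 (Submodule.finrank_eq_zero.mp h)
    have hne2 : Module.finrank ℝ (LinearMap.range e) ≠ 2 := by
      intro h2
      have htop : LinearMap.range e = ⊤ :=
        Submodule.eq_top_of_finrank_eq (by rw [h2, Complex.finrank_real_complex])
      have hsurj : Function.Surjective e := LinearMap.range_eq_top.mp htop
      obtain ⟨q₁, hq₁⟩ := hsurj γ
      obtain ⟨q₂, hq₂⟩ := hsurj (γ * Complex.I)
      have h1 := hsq q₁
      rw [hq₁] at h1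
      have hb1 : (γ : ℂ) = ((B q₁ q₁ : ℝ) : ℂ) :=
        mul_left_cancel₀ hγ0 (by rw [← h1]; ring)
      have h2' := hsq q₂
      rw [hq₂] at h2'
      have hb2 : -(γ : ℂ) = ((B q₂ q₂ : ℝ) : ℂ) := by
        apply mul_left_cancel₀ hγ0
        rw [← h2']
        rw [mul_pow, Complex.I_sq]
        ring
      have hbb1 := hB0 q₁
      have hbb2 := hB0 q₂
      have : (B q₁ q₁ : ℝ) = -(B q₂ q₂ : ℝ) := by
        have : ((B q₁ q₁ : ℝ) : ℂ) = ((-(B q₂ q₂ : ℝ) : ℝ) : ℂ) := by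
          rw [← hb1, Complex.ofReal_neg, ← hb2, neg_neg]
        exact_mod_cast this
      have hz1 : B q₁ q₁ = 0 := by linarith
      apply hγ0
      rw [hb1, hz1]
      simp
    omega
  have hrn := LinearMap.finrank_range_add_finrank_ker e
  rw [hspan, Submodule.finrank_map_subtype_eq, hkereq]
  omega
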